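/- arXiv:2102.06622 — 5 statements merged into one kernel-verified Lean document; each statement's English description precedes it below -/
import Mathlib

section
/- Let f be a convex differentiable function on a convex set U with minimizer u* ∈ U, and suppose that for all w ∈ U the directional derivative satisfies ⟨u* − w, ∇f(w)⟩ ∈ [−2DG, 0] for constants D, G > 0. Then for all w ∈ U: f(u*) − f(w) ≥ 2⟨u* − w, ∇f(w)⟩ + (1/(2DG))·(⟨u* − w, ∇f(w)⟩)². -/
open RealInnerProductSpace

lemma grad_ineq {E : Type*} [NormedAddCommGroup E] [InnerProductSpace ℝ E] [CompleteSpace E]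
    {U : Set E} {f : E → ℝ} {w v : E} {gw : E}
    (hf : ConvexOn ℝ U f) (hw : w ∈ U) (hv : v ∈ U)
    (hg : HasGradientAt f gw w) :
    ⟪v - w, gw⟫ ≤ f v - f w := by
  set u : E := v - w with hu
  have hc : HasDerivAt (fun t : ℝ => w + t • u) u 0 := by
    simpa using ((hasDerivAt_id (0:ℝ)).smul_const u).const_add w
  have hc0 : (fun t : ℝ => w + t • u) 0 = w := by simp
  have hg' : HasFDerivAt f (InnerProductSpace.toDual ℝ E gw) ((fun t : ℝ => w + t • u) 0) := by
    rw [hc0]; exact hg.hasFDerivAt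
  have hd : HasDerivAt (fun t : ℝ => f (w + t • u)) ⟪gw, u⟫ 0 := by
    simpa [InnerProductSpace.toDual_apply_apply, Function.comp_def] using hg'.comp_hasDerivAt 0 hc
  -- slope bound on (0,1]
  have hslope : ∀ t ∈ Set.Ioc (0:ℝ) 1, slope (fun t : ℝ => f (w + t • u)) 0 t ≤ f v - f w := by
    intro t ht
    have hconv := hf.2 hw hv (by linarith [ht.2] : (0:ℝ) ≤ 1 - t) (le_of_lt ht.1) (by ring)
    have heq : (1 - t) • w + t • v = w + t • u := by
      simp [hu, smul_sub]; module
    rw [heq] at hconv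
    rw [slope_def_field, div_le_iff₀ (by simpa using ht.1)]
    simp only [zero_smul, add_zero, sub_zero]
    simp only [smul_eq_mul] at hconv
    nlinarith [hconv]
  have htend : Filter.Tendsto (slope (fun t : ℝ => f (w + t • u)) 0) (nhdsWithin 0 (Set.Ioi 0)) (nhds ⟪gw, u⟫) := by
    have := hasDerivAt_iff_tendsto_slope.mp hd
    exact this.mono_left (nhdsWithin_mono _ (fun x hx => ne_of_gt hx))
  have hle : ⟪gw, u⟫ ≤ f v - f w := by
    refine le_of_tendsto htend ?_
    filter_upwards [Ioc_mem_nhdsGT one_pos] with t ht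
    exact hslope t ht
  rwa [real_inner_comm]

theorem stmt_1 {d : ℕ} (U : Set (EuclideanSpace ℝ (Fin d))) (hU : Convex ℝ U)
    (f : EuclideanSpace ℝ (Fin d) → ℝ)
    (g : EuclideanSpace ℝ (Fin d) → EuclideanSpace ℝ (Fin d))
    (hf : ConvexOn ℝ U f)
    (hdiff : ∀ x ∈ U, HasGradientAt f (g x) x)
    (ustar : EuclideanSpace ℝ (Fin d)) (hustar : ustar ∈ U)
    (hmin : ∀ u ∈ U, f ustar ≤ f u)
    (D G : ℝ) (hD : 0 < D) (hG : 0 < G)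
    (hrange : ∀ w ∈ U, ⟪ustar - w, g w⟫ ∈ Set.Icc (-(2 * D * G)) 0) :
    ∀ w ∈ U,
      f ustar - f w ≥
        2 * ⟪ustar - w, g w⟫ + (1 / (2 * D * G)) * ⟪ustar - w, g w⟫ ^ 2 := by
  intro w hw
  set t : ℝ := ⟪ustar - w, g w⟫ with hT
  have hgi : t ≤ f ustar - f w := grad_ineq hf hw hustar (hdiff w hw)
  obtain ⟨hlo, hhi⟩ := hrange w hw
  have hc : (0:ℝ) < 2 * D * G := by positivity
  have h1 : t ^ 2 ≤ (-t) * (2 * D * G) := by nlinarith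
  have h2 : (1 / (2 * D * G)) * t ^ 2 ≤ -t := by
    rw [one_div, inv_mul_le_iff₀ hc]
    nlinarith
  linarith
end

section
/- Let A, B be symmetric positive definite d×d matrices with A ⪰ B (i.e., A − B positive semi-definite). Then trace(A⁻¹(A − B)) ≤ log(det A / det B). -/
open Matrix Finset
open scoped MatrixOrder

lemma trace_eq_sum_eigs {n : Type*} [Fintype n] [DecidableEq n] {M : Matrix n n ℝ}
    (hM : M.IsHermitian) : M.trace = ∑ i, hM.eigenvalues i := by
  rw [hM.trace_eq_sum_eigenvalues]
  simp

lemma key_ineq {n : Type*} [Fintype n] [DecidableEq n] {M : Matrix n n ℝ}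
    (hM : M.PosDef) : (Fintype.card n : ℝ) - M.trace ≤ - Real.log M.det := by
  have hpos : ∀ i, 0 < hM.1.eigenvalues i := hM.eigenvalues_pos
  have hdet : M.det = ∏ i, hM.1.eigenvalues i := by
    simpa using hM.1.det_eq_prod_eigenvalues
  rw [trace_eq_sum_eigs hM.1, hdet,
    Real.log_prod (fun i _ => (hpos i).ne'), ← Finset.sum_neg_distrib]
  have h1 : (Fintype.card n : ℝ) - ∑ i, hM.1.eigenvalues i
      = ∑ i, (1 - hM.1.eigenvalues i) := by
    rw [Finset.sum_sub_distrib]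
    simp [Finset.card_univ]
  rw [h1]
  refine Finset.sum_le_sum fun i _ => ?_
  have := Real.log_le_sub_one_of_pos (hpos i)
  linarith

theorem stmt_7 {d : ℕ} (A B : Matrix (Fin d) (Fin d) ℝ)
    (hA : A.PosDef) (hB : B.PosDef) (hAB : (A - B).PosSemidef) :
    (A⁻¹ * (A - B)).trace ≤ Real.log (A.det / B.det) := by
  classical
  set S := CFC.sqrt A with hSdef
  have hSS : S * S = A := CFC.sqrt_mul_sqrt_self A hA.posSemidef.nonneg
  have hSherm : S.IsHermitian := (CFC.sqrt_nonneg A).posSemidef.1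
  have hSdet : S.det ≠ 0 := by
    intro h
    have : A.det = 0 := by rw [← hSS, Matrix.det_mul, h, mul_zero]
    exact hA.det_pos.ne' this
  have hSunit : IsUnit S := (Matrix.isUnit_iff_isUnit_det S).mpr (Ne.isUnit hSdet)
  haveI : Invertible S := hSunit.invertible
  have hSinv : (S⁻¹).IsHermitian := hSherm.inv
  -- M = S⁻¹ B S⁻¹ is PosDef
  set M : Matrix (Fin d) (Fin d) ℝ := S⁻¹ * B * S⁻¹ with hMdef
  have hMpd : M.PosDef := by
    rw [Matrix.posDef_iff_dotProduct_mulVec]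
    constructor
    · show Mᴴ = M
      rw [hMdef, Matrix.conjTranspose_mul, Matrix.conjTranspose_mul, hSinv.eq, hB.1.eq,
        Matrix.mul_assoc]
    · intro x hx
      have hy : S⁻¹ *ᵥ x ≠ 0 := fun h =>
        hx ((Matrix.mulVec_injective_of_invertible S⁻¹) (by simp [h]))
      have : star x ⬝ᵥ M *ᵥ x = star (S⁻¹ *ᵥ x) ⬝ᵥ B *ᵥ (S⁻¹ *ᵥ x) := by
        rw [hMdef, Matrix.mul_assoc, ← Matrix.mulVec_mulVec, Matrix.dotProduct_mulVec,
          Matrix.star_mulVec, hSinv.eq, ← Matrix.mulVec_mulVec]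
      rw [this]
      exact hB.dotProduct_mulVec_pos hy
  -- trace identity
  have htr : (A⁻¹ * (A - B)).trace = (Fintype.card (Fin d) : ℝ) - M.trace := by
    have hAinv : A⁻¹ = S⁻¹ * S⁻¹ := by
      rw [← hSS, Matrix.mul_inv_rev]
    rw [Matrix.mul_sub, Matrix.nonsing_inv_mul A (Ne.isUnit hA.det_pos.ne'), Matrix.trace_sub,
      Matrix.trace_one, hAinv]
    have : (S⁻¹ * S⁻¹ * B).trace = M.trace := by
      rw [hMdef, Matrix.mul_assoc, Matrix.trace_mul_comm, Matrix.mul_assoc]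
    simp [this, Fintype.card_fin]
  -- det identity
  have hdet : M.det = B.det / A.det := by
    rw [hMdef, Matrix.det_mul, Matrix.det_mul, Matrix.det_nonsing_inv, ← hSS, Matrix.det_mul, Ring.inverse_eq_inv']
    field_simp [hSdet]
  have hlog : Real.log (A.det / B.det) = - Real.log M.det := by
    rw [hdet, Real.log_div hB.det_pos.ne' hA.det_pos.ne',
      Real.log_div hA.det_pos.ne' hB.det_pos.ne']
    ring
  rw [htr, hlog]
  exact key_ineq hMpd
end

section
/- Let β ∈ (0,1], B > 0, C > 0, and let X, Y be real-valued random variables on a probability space such that X ≤ Y ≤ C pointwise, E[X²] ≤ B·E[X]^β (the Bernstein condition for X, with E[X] ≥ 0), and all moments below exist. Then E[Y²] ≤ B'·E[Y]^β for B' = max{ B, (2/β)·C^{2−β} }. -/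
open MeasureTheory

/-- Tangent line inequality for the concave function `x ↦ x ^ β` on `[0, ∞)`. -/
lemma rpow_tangent {a x β : ℝ} (ha : 0 < a) (hx : 0 ≤ x) (hβ1 : 0 < β) (hβ2 : β ≤ 1) :
    x ^ β ≤ a ^ β + β * a ^ (β - 1) * (x - a) := by
  have hs : (-1 : ℝ) ≤ x / a - 1 := by
    have : 0 ≤ x / a := div_nonneg hx ha.le
    linarith
  have h := rpow_one_add_le_one_add_mul_self hs hβ1.le hβ2
  have hxa : (1 + (x / a - 1)) = x / a := by ring
  rw [hxa, Real.div_rpow hx ha.le] at h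
  have haβ : 0 < a ^ β := Real.rpow_pos_of_pos ha β
  have h2 : x ^ β ≤ a ^ β * (1 + β * (x / a - 1)) := by
    rw [div_le_iff₀ haβ] at h
    linarith [h]
  have hab : a ^ (β - 1) = a ^ β / a := by
    rw [Real.rpow_sub ha, Real.rpow_one]
  calc x ^ β ≤ a ^ β * (1 + β * (x / a - 1)) := h2
    _ = a ^ β + β * (a ^ β / a) * (x - a) := by field_simp
    _ = a ^ β + β * a ^ (β - 1) * (x - a) := by rw [hab]

/-- The key real-number inequality. -/
lemma key_ineq_s9 {β B C EX EY : ℝ} (hβ1 : 0 < β) (hβ2 : β ≤ 1) (hB : 0 < B) (hC : 0 < C)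
    (h0 : 0 ≤ EX) (h1 : EX ≤ EY) (h2 : EY ≤ C) :
    B * EX ^ β + 2 * C * (EY - EX) ≤ max B ((2 / β) * C ^ (2 - β)) * EY ^ β := by
  rcases eq_or_lt_of_le (h0.trans h1) with hEY | hEY
  · -- EY = 0, hence EX = 0
    have hEX0 : EX = 0 := le_antisymm (h1.trans hEY.symm.le) h0
    rw [← hEY, hEX0, Real.zero_rpow hβ1.ne']
    simp
  · -- 0 < EY
    have hEYβ : 0 < EY ^ β := Real.rpow_pos_of_pos hEY β
    have hEYle : EY ≤ C ^ (1 - β) * EY ^ β := by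
      have e1 : EY = EY ^ (1 - β) * EY ^ β := by
        rw [← Real.rpow_add hEY, show (1:ℝ) - β + β = 1 by ring, Real.rpow_one]
      have e2 : EY ^ (1 - β) ≤ C ^ (1 - β) :=
        Real.rpow_le_rpow hEY.le h2 (by linarith)
      nlinarith
    have hCC : C * C ^ (1 - β) = C ^ (2 - β) := by
      nth_rewrite 1 [← Real.rpow_one C]
      rw [← Real.rpow_add hC, show (1:ℝ) + (1 - β) = 2 - β by ring]
    by_cases hcase : 2 * C ≤ β * B * EY ^ (β - 1)
    · -- tangent at EY : the bound B * EY ^ β suffices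
      have ht := rpow_tangent hEY h0 hβ1 hβ2
      have hmax : B * EY ^ β ≤ max B ((2 / β) * C ^ (2 - β)) * EY ^ β :=
        mul_le_mul_of_nonneg_right (le_max_left _ _) hEYβ.le
      -- B * EX^β + 2C(EY-EX) ≤ B*EY^β
      have hkey : B * EX ^ β + 2 * C * (EY - EX) ≤ B * EY ^ β := by
        have hB1 : B * EX ^ β ≤ B * (EY ^ β + β * EY ^ (β - 1) * (EX - EY)) :=
          mul_le_mul_of_nonneg_left ht hB.le
        nlinarith [mul_le_mul_of_nonneg_right hcase (sub_nonneg.2 h1)]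
      linarith
    · push_neg at hcase
      rcases eq_or_lt_of_le hβ2 with hβeq | hβlt
      · -- β = 1
        subst hβeq
        rw [Real.rpow_one, Real.rpow_one]
        have hc2 : (2:ℝ) / 1 * C ^ ((2:ℝ) - 1) = 2 * C := by
          norm_num
        have hm1 : B ≤ max B (2 / 1 * C ^ ((2:ℝ) - 1)) := le_max_left _ _
        have hm2 : 2 * C ≤ max B (2 / 1 * C ^ ((2:ℝ) - 1)) := by
          rw [← hc2]; exact le_max_right _ _
        nlinarith [mul_le_mul_of_nonneg_right hm1 h0,
          mul_le_mul_of_nonneg_right hm2 (sub_nonneg.2 h1)]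
      · -- β < 1 : tangent at a = (β*B/(2*C))^(1/(1-β))
        set a : ℝ := (β * B / (2 * C)) ^ ((1:ℝ) / (1 - β)) with ha_def
        have hq : 0 < β * B / (2 * C) := by positivity
        have ha : 0 < a := Real.rpow_pos_of_pos hq _
        have h1β : 0 < 1 - β := by linarith
        have hexp : (1:ℝ) / (1 - β) * (β - 1) = -1 := by
          field_simp
          ring
        have haβ1 : a ^ (β - 1) = 2 * C / (β * B) := by
          rw [ha_def, ← Real.rpow_mul hq.le, hexp, Real.rpow_neg_one, inv_div]
        have hBa : β * B * a ^ (β - 1) = 2 * C := by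
          rw [haβ1]; field_simp
        have haβ : a ^ β = a ^ (β - 1) * a := by
          rw [← Real.rpow_add_one ha.ne' (β - 1), show β - 1 + 1 = β by ring]
        have hBaβ3 : β * (B * a ^ β) = 2 * C * a := by
          rw [haβ]; linear_combination a * hBa
        -- a ≤ EY
        have haEY : a ≤ EY := by
          have hEYneg : EY ^ (β - 1) = (EY ^ (1 - β))⁻¹ := by
            rw [show β - 1 = -(1 - β) by ring, Real.rpow_neg hEY.le]
          have hEY1β : 0 < EY ^ (1 - β) := Real.rpow_pos_of_pos hEY _
          have hq_lt : β * B / (2 * C) < EY ^ (1 - β) := by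
            rw [hEYneg] at hcase
            rw [div_lt_iff₀ (by positivity : (0:ℝ) < 2 * C)]
            calc β * B = β * B * (EY ^ (1 - β))⁻¹ * EY ^ (1 - β) := by
                  field_simp
              _ < 2 * C * EY ^ (1 - β) :=
                  mul_lt_mul_of_pos_right hcase hEY1β
              _ = EY ^ (1 - β) * (2 * C) := by ring
          calc a ≤ (EY ^ (1 - β)) ^ ((1:ℝ) / (1 - β)) :=
                Real.rpow_le_rpow hq.le hq_lt.le (by positivity)
            _ = EY := by
                rw [← Real.rpow_mul hEY.le, show (1 - β) * ((1:ℝ) / (1 - β)) = 1 by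
                  field_simp, Real.rpow_one]
        -- reduce to the (2/β) C^(2-β) bound
        have hmax : (2 / β) * C ^ (2 - β) * EY ^ β ≤
            max B ((2 / β) * C ^ (2 - β)) * EY ^ β :=
          mul_le_mul_of_nonneg_right (le_max_right _ _) hEYβ.le
        have hT : B * EX ^ β + 2 * C * (EY - EX) ≤ (2 / β) * C ^ (2 - β) * EY ^ β := by
          rw [← mul_le_mul_iff_of_pos_left hβ1]
          have hrhs : β * ((2 / β) * C ^ (2 - β) * EY ^ β) = 2 * C ^ (2 - β) * EY ^ β := by
            field_simp
          rw [hrhs]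
          have ht := rpow_tangent ha h0 hβ1 hβ2
          have hh := mul_le_mul_of_nonneg_left ht (by positivity : (0:ℝ) ≤ β * B)
          have hA : β * B * EX ^ β ≤ 2 * C * a + 2 * C * β * (EX - a) := by
            calc β * B * EX ^ β ≤ β * B * (a ^ β + β * a ^ (β - 1) * (EX - a)) := hh
              _ = 2 * C * a + 2 * C * β * (EX - a) := by
                  linear_combination hBaβ3 + β * (EX - a) * hBa
          have hE2 : 2 * C * EY ≤ 2 * C * (C ^ (1 - β) * EY ^ β) :=
            mul_le_mul_of_nonneg_left hEYle (by positivity)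
          have hE3 : 2 * C * (C ^ (1 - β) * EY ^ β) = 2 * C ^ (2 - β) * EY ^ β := by
            rw [← hCC]; ring
          nlinarith [mul_nonneg (mul_nonneg (by linarith : (0:ℝ) ≤ 2 * C) h1β.le)
            (sub_nonneg.2 haEY)]
        linarith

theorem stmt_9 {Ω : Type*} [MeasurableSpace Ω] (μ : Measure Ω) [IsProbabilityMeasure μ]
    (X Y : Ω → ℝ) (β B C : ℝ) (hβ : β ∈ Set.Ioc (0:ℝ) 1) (hB : 0 < B) (hC : 0 < C)
    (hXY : ∀ ω, X ω ≤ Y ω) (hYC : ∀ ω, Y ω ≤ C)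
    (hXint : Integrable X μ) (hX2int : Integrable (fun ω => X ω ^ 2) μ)
    (hYint : Integrable Y μ) (hY2int : Integrable (fun ω => Y ω ^ 2) μ)
    (hEX : 0 ≤ ∫ ω, X ω ∂μ)
    (hbern : ∫ ω, X ω ^ 2 ∂μ ≤ B * (∫ ω, X ω ∂μ) ^ β) :
    ∫ ω, Y ω ^ 2 ∂μ ≤ max B ((2 / β) * C ^ (2 - β)) * (∫ ω, Y ω ∂μ) ^ β := by
  obtain ⟨hβ1, hβ2⟩ := hβ
  have h1 : (∫ ω, X ω ∂μ) ≤ ∫ ω, Y ω ∂μ := integral_mono hXint hYint hXY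
  have h2 : (∫ ω, Y ω ∂μ) ≤ C := by
    have := integral_mono hYint (integrable_const C) hYC
    simpa using this
  have hptw : ∀ ω, Y ω ^ 2 ≤ X ω ^ 2 + 2 * C * (Y ω - X ω) := by
    intro ω
    nlinarith [hXY ω, hYC ω, mul_nonneg (sub_nonneg.2 (hXY ω))
      (sub_nonneg.2 (show X ω + Y ω ≤ 2 * C by nlinarith [hXY ω, hYC ω]))]
  have hg : Integrable (fun ω => 2 * C * (Y ω - X ω)) μ := (hYint.sub hXint).const_mul _
  have hint2 : Integrable (fun ω => X ω ^ 2 + 2 * C * (Y ω - X ω)) μ := hX2int.add hg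
  have hstep : ∫ ω, Y ω ^ 2 ∂μ ≤
      (∫ ω, X ω ^ 2 ∂μ) + 2 * C * ((∫ ω, Y ω ∂μ) - ∫ ω, X ω ∂μ) := by
    calc ∫ ω, Y ω ^ 2 ∂μ ≤ ∫ ω, (X ω ^ 2 + 2 * C * (Y ω - X ω)) ∂μ :=
          integral_mono hY2int hint2 hptw
      _ = (∫ ω, X ω ^ 2 ∂μ) + 2 * C * ((∫ ω, Y ω ∂μ) - ∫ ω, X ω ∂μ) := by
          rw [integral_add hX2int hg, MeasureTheory.integral_const_mul, integral_sub hYint hXint]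
  have hkey := key_ineq_s9 hβ1 hβ2 hB hC hEX h1 h2
  linarith
end

section
/- Let X be a random vector in ℝᵈ with ‖X‖₂ ≤ 1 almost surely, Y a {−1,+1}-valued random variable, f_u the hinge loss f(u) = max{0, 1 − Y·⟨u,X⟩} restricted to the unit ball U = {u : ‖u‖₂ ≤ 1}, μ = E[Y·X] with ‖μ‖₂ > 0, and λ_max the maximum eigenvalue of E[X Xᵀ]. Then (a) u* := μ/‖μ‖₂ minimizes E[f(u)] over U, and (b) for all w ∈ U: (w − u*)ᵀ E[X Xᵀ] (w − u*) ≤ (2λ_max/‖μ‖₂) · ⟨w − u*, −μ⟩. -/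
open Matrix in
lemma aux_quad {n : Type*} [Fintype n] [DecidableEq n] (M : Matrix n n ℝ) (hMh : M.IsHermitian)
    (lam : ℝ) (hle : ∀ i, hMh.eigenvalues i ≤ lam) (v : n → ℝ) :
    dotProduct v (M.mulVec v) ≤ lam * dotProduct v v := by
  set U := (hMh.eigenvectorUnitary : Matrix n n ℝ) with hUdef
  have hU : U * star U = 1 := (Matrix.mem_unitaryGroup_iff).mp hMh.eigenvectorUnitary.2
  have hdiag : Matrix.PosSemidef (Matrix.diagonal (fun i => lam - hMh.eigenvalues i)) :=
    Matrix.PosSemidef.diagonal (fun i => sub_nonneg.2 (hle i))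
  have hD : Matrix.diagonal (fun i => lam - hMh.eigenvalues i)
      = lam • (1 : Matrix n n ℝ) - Matrix.diagonal (RCLike.ofReal ∘ hMh.eigenvalues) := by
    ext i j
    by_cases h : i = j <;> simp [h, Matrix.diagonal_apply, Matrix.one_apply]
  have hA : U * Matrix.diagonal (fun i => lam - hMh.eigenvalues i) * Uᴴ
      = lam • (1 : Matrix n n ℝ) - M := by
    rw [hD, Matrix.mul_sub, Matrix.sub_mul]
    congr 1
    · rw [Matrix.mul_smul, Matrix.mul_one, Matrix.smul_mul]
      rw [show Uᴴ = star U from rfl, hU]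
    · exact hMh.spectral_theorem.symm
  have hpsd : (lam • (1 : Matrix n n ℝ) - M).PosSemidef := by
    rw [← hA]; exact hdiag.mul_mul_conjTranspose_same U
  have h0 := hpsd.dotProduct_mulVec_nonneg v
  simp only [star_trivial, Matrix.sub_mulVec, Matrix.smul_mulVec, Matrix.one_mulVec,
    dotProduct_sub, dotProduct_smul, smul_eq_mul] at h0
  linarith

lemma aux_comp {d : ℕ} (x : EuclideanSpace ℝ (Fin d)) (i : Fin d) : |x i| ≤ ‖x‖ := by
  have := EuclideanSpace.norm_eq x
  rw [this]
  have h1 : |x i| = Real.sqrt (|x i|^2) := by rw [Real.sqrt_sq_eq_abs, abs_abs]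
  rw [h1]
  apply Real.sqrt_le_sqrt
  exact Finset.single_le_sum (f := fun j => |x j|^2) (fun j _ => sq_nonneg _) (Finset.mem_univ i)

open MeasureTheory RealInnerProductSpace

theorem stmt_10 {d : ℕ} (hd : 0 < d) {Ω : Type*} [MeasurableSpace Ω]
    (μ : Measure Ω) [IsProbabilityMeasure μ]
    (X : Ω → EuclideanSpace ℝ (Fin d)) (Y : Ω → ℝ)
    (hXmeas : Measurable X) (hYmeas : Measurable Y)
    (hXnorm : ∀ ω, ‖X ω‖ ≤ 1) (hYsign : ∀ ω, Y ω = 1 ∨ Y ω = -1)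
    (m : EuclideanSpace ℝ (Fin d)) (hm : m = ∫ ω, Y ω • X ω ∂μ) (hm0 : 0 < ‖m‖)
    (M : Matrix (Fin d) (Fin d) ℝ)
    (hMdef : ∀ i j, M i j = ∫ ω, X ω i * X ω j ∂μ)
    (hMh : M.IsHermitian)
    (lamMax : ℝ) (hlam : lamMax = ⨆ i, hMh.eigenvalues i)
    (ustar : EuclideanSpace ℝ (Fin d)) (hustar : ustar = ‖m‖⁻¹ • m) :
    (∀ u : EuclideanSpace ℝ (Fin d), ‖u‖ ≤ 1 →
        ∫ ω, max 0 (1 - Y ω * ⟪ustar, X ω⟫) ∂μ ≤ ∫ ω, max 0 (1 - Y ω * ⟪u, X ω⟫) ∂μ) ∧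
    (∀ w : EuclideanSpace ℝ (Fin d), ‖w‖ ≤ 1 →
        ∑ i, ∑ j, (w - ustar) i * M i j * (w - ustar) j
          ≤ 2 * lamMax / ‖m‖ * ⟪w - ustar, -m⟫) := by
  have hYabs : ∀ ω, |Y ω| = 1 := fun ω => by rcases hYsign ω with h | h <;> simp [h]
  have hint1 : Integrable (fun ω => Y ω • X ω) μ := by
    refine Integrable.mono' (integrable_const 1) (hYmeas.smul hXmeas).aestronglyMeasurable ?_
    filter_upwards with ω
    rw [norm_smul, Real.norm_eq_abs, hYabs ω, one_mul]
    exact hXnorm ω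
  have hus1 : ‖ustar‖ = 1 := by
    rw [hustar, norm_smul, norm_inv, norm_norm, inv_mul_cancel₀ hm0.ne']
  have husm : ⟪ustar, m⟫ = ‖m‖ := by
    rw [hustar, real_inner_smul_left, real_inner_self_eq_norm_sq, sq, ← mul_assoc,
      inv_mul_cancel₀ hm0.ne', one_mul]
  have hkey : ∀ u : EuclideanSpace ℝ (Fin d), ‖u‖ ≤ 1 →
      ∫ ω, max 0 (1 - Y ω * ⟪u, X ω⟫) ∂μ = 1 - ⟪u, m⟫ := by
    intro u hu
    have hptw : ∀ ω, max 0 (1 - Y ω * ⟪u, X ω⟫) = 1 - Y ω * ⟪u, X ω⟫ := by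
      intro ω
      apply max_eq_right
      have h1 : |Y ω * ⟪u, X ω⟫| ≤ 1 := by
        rw [abs_mul, hYabs ω, one_mul]
        calc |⟪u, X ω⟫| ≤ ‖u‖ * ‖X ω‖ := abs_real_inner_le_norm u (X ω)
          _ ≤ 1 := by nlinarith [norm_nonneg u, norm_nonneg (X ω), hXnorm ω]
      linarith [(abs_le.1 h1).2]
    have hint2 : Integrable (fun ω => Y ω * ⟪u, X ω⟫) μ := by
      have h := hint1.const_inner (𝕜 := ℝ) u
      simpa only [real_inner_smul_right] using h
    have hrw : (fun ω => Y ω * ⟪u, X ω⟫) = fun ω => ⟪u, Y ω • X ω⟫ := by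
      funext ω; rw [real_inner_smul_right]
    calc ∫ ω, max 0 (1 - Y ω * ⟪u, X ω⟫) ∂μ
        = ∫ ω, (1 - Y ω * ⟪u, X ω⟫) ∂μ := by simp only [hptw]
      _ = (∫ _, (1 : ℝ) ∂μ) - ∫ ω, Y ω * ⟪u, X ω⟫ ∂μ :=
          integral_sub (integrable_const 1) hint2
      _ = 1 - ⟪u, m⟫ := by
          rw [integral_const, hrw, integral_inner hint1 u, ← hm]
          simp
  constructor
  · intro u hu
    rw [hkey ustar (le_of_eq hus1), hkey u hu, husm]
    have h3 : ⟪u, m⟫ ≤ ‖m‖ := by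
      calc ⟪u, m⟫ ≤ ‖u‖ * ‖m‖ := real_inner_le_norm u m
        _ ≤ ‖m‖ := by nlinarith
    linarith
  · intro w hw
    have hlamle : ∀ i, hMh.eigenvalues i ≤ lamMax := by
      rw [hlam]
      exact fun i => le_ciSup (Set.Finite.bddAbove (Set.finite_range _)) i
    have hXi : ∀ i, Measurable fun ω => X ω i := fun i =>
      (EuclideanSpace.proj i (𝕜 := ℝ)).continuous.measurable.comp hXmeas
    have hXib : ∀ ω i, |X ω i| ≤ 1 := fun ω i => (aux_comp (X ω) i).trans (hXnorm ω)
    have hintXij : ∀ i j : Fin d, Integrable (fun ω => X ω i * X ω j) μ := by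
      intro i j
      refine Integrable.mono' (integrable_const 1)
        ((hXi i).mul (hXi j)).aestronglyMeasurable ?_
      filter_upwards with ω
      rw [Real.norm_eq_abs, abs_mul]
      nlinarith [abs_nonneg (X ω i), abs_nonneg (X ω j), hXib ω i, hXib ω j]
    have hMpsd : M.PosSemidef := by
      refine Matrix.PosSemidef.of_dotProduct_mulVec_nonneg hMh fun x => ?_
      have hform : dotProduct (star x) (M.mulVec x)
          = ∫ ω, (∑ i, x i * X ω i) ^ 2 ∂μ := by
        have : ∀ ω, (∑ i, x i * X ω i) ^ 2 = ∑ i, ∑ j, x i * (x j * (X ω i * X ω j)) := by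
          intro ω
          rw [sq, Finset.sum_mul_sum]
          exact Finset.sum_congr rfl fun i _ => Finset.sum_congr rfl fun j _ => by ring
        simp only [this]
        rw [integral_finset_sum _ (fun i _ => by
          apply integrable_finset_sum
          intro j _
          exact ((hintXij i j).const_mul _).const_mul _)]
        simp only [star_trivial, dotProduct, Matrix.mulVec, hMdef]
        refine Finset.sum_congr rfl fun i _ => ?_
        rw [integral_finset_sum _ (fun j _ => ((hintXij i j).const_mul _).const_mul _)]
        rw [Finset.mul_sum]
        refine Finset.sum_congr rfl fun j _ => ?_
        rw [integral_const_mul, integral_const_mul]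
        ring
      rw [hform]
      exact integral_nonneg fun ω => sq_nonneg _
    have hlam0 : 0 ≤ lamMax :=
      le_trans (hMpsd.eigenvalues_nonneg ⟨0, hd⟩) (hlamle ⟨0, hd⟩)
    set v : EuclideanSpace ℝ (Fin d) := w - ustar with hv
    have hquad : ∑ i, ∑ j, v i * M i j * v j
        = dotProduct (fun i => v i) (M.mulVec fun i => v i) := by
      simp only [dotProduct, Matrix.mulVec, Finset.mul_sum]
      exact Finset.sum_congr rfl fun i _ => Finset.sum_congr rfl fun j _ => by ring
    have h1 := aux_quad M hMh lamMax hlamle (fun i => v i)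
    have hdotv : dotProduct (fun i => v i) (fun i => v i) = ‖v‖ ^ 2 := by
      rw [← real_inner_self_eq_norm_sq]
      simp [dotProduct, PiLp.inner_apply, RCLike.inner_apply, mul_comm]
      rw [EuclideanSpace.norm_eq, Real.sq_sqrt (by positivity)]
      simp [sq]
    have hexp : ⟪v, -m⟫ = ‖m‖ - ⟪w, m⟫ := by
      rw [hv, inner_neg_right, inner_sub_left, husm]; ring
    have hwus : ⟪w, ustar⟫ = ‖m‖⁻¹ * ⟪w, m⟫ := by
      rw [hustar, real_inner_smul_right]
    have hnv : ‖v‖ ^ 2 ≤ 2 * (1 - ‖m‖⁻¹ * ⟪w, m⟫) := by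
      have := @norm_sub_sq_real (EuclideanSpace ℝ (Fin d)) _ _ w ustar
      rw [hwus, hus1] at this
      rw [hv, this]
      nlinarith [norm_nonneg w]
    have hfin : 2 * lamMax / ‖m‖ * ⟪v, -m⟫ = lamMax * (2 * (1 - ‖m‖⁻¹ * ⟪w, m⟫)) := by
      rw [hexp]
      field_simp
    calc ∑ i, ∑ j, v i * M i j * v j
        = dotProduct (fun i => v i) (M.mulVec fun i => v i) := hquad
      _ ≤ lamMax * dotProduct (fun i => v i) (fun i => v i) := h1
      _ = lamMax * ‖v‖ ^ 2 := by rw [hdotv]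
      _ ≤ lamMax * (2 * (1 - ‖m‖⁻¹ * ⟪w, m⟫)) := by
          exact mul_le_mul_of_nonneg_left hnv hlam0
      _ = 2 * lamMax / ‖m‖ * ⟪v, -m⟫ := hfin.symm
end

section
/- Let x be a random vector in ℝᵈ, h' : ℝ → ℝ a measurable function, w ∈ ℝᵈ, and suppose 0 < L₋ ≤ |h'(⟨w,x⟩)| ≤ L₊ almost surely, and E[x·xᵀ] ⪰ C·diag(E[x·xᵀ]) for some C > 0, where diag(M) zeroes out off-diagonal entries. Then E[ h'(⟨w,x⟩)²·x·xᵀ ] ⪰ (C·L₋²/L₊²)·diag( E[ h'(⟨w,x⟩)²·x·xᵀ ] ). -/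
open MeasureTheory RealInnerProductSpace Matrix

private lemma expand_sq {d : ℕ} {Ω : Type*} (c : Ω → ℝ)
    (x : Ω → EuclideanSpace ℝ (Fin d)) (v : Fin d → ℝ) (ω : Ω) :
    c ω * (∑ i, v i * x ω i) ^ 2
      = ∑ i, ∑ j, v i * v j * (c ω * (x ω i * x ω j)) := by
  rw [sq, Finset.sum_mul_sum, Finset.mul_sum]
  refine Finset.sum_congr rfl fun i _ => ?_
  rw [Finset.mul_sum]
  exact Finset.sum_congr rfl fun j _ => by ring

private lemma quad_int {d : ℕ} {Ω : Type*} [MeasurableSpace Ω] {μ : Measure Ω}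
    (c : Ω → ℝ) (x : Ω → EuclideanSpace ℝ (Fin d))
    (hint : ∀ i j, Integrable (fun ω => c ω * (x ω i * x ω j)) μ)
    (v : Fin d → ℝ) :
    Integrable (fun ω => c ω * (∑ i, v i * x ω i) ^ 2) μ := by
  have : (fun ω => c ω * (∑ i, v i * x ω i) ^ 2)
      = fun ω => ∑ i, ∑ j, v i * v j * (c ω * (x ω i * x ω j)) :=
    funext (expand_sq c x v)
  rw [this]
  exact integrable_finset_sum _ fun i _ =>
    integrable_finset_sum _ fun j _ => (hint i j).const_mul _

private lemma quad_eq {d : ℕ} {Ω : Type*} [MeasurableSpace Ω] (μ : Measure Ω)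
    (c : Ω → ℝ) (x : Ω → EuclideanSpace ℝ (Fin d))
    (hint : ∀ i j, Integrable (fun ω => c ω * (x ω i * x ω j)) μ)
    (M : Matrix (Fin d) (Fin d) ℝ)
    (hM : ∀ i j, M i j = ∫ ω, c ω * (x ω i * x ω j) ∂μ)
    (v : Fin d → ℝ) :
    v ⬝ᵥ M *ᵥ v = ∫ ω, c ω * (∑ i, v i * x ω i) ^ 2 ∂μ := by
  simp_rw [expand_sq c x v]
  rw [integral_finset_sum _ (fun i _ =>
    integrable_finset_sum _ (fun j _ => (hint i j).const_mul _))]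
  have : ∀ i, (∫ ω, ∑ j, v i * v j * (c ω * (x ω i * x ω j)) ∂μ)
      = ∑ j, v i * v j * M i j := by
    intro i
    rw [integral_finset_sum _ (fun j _ => (hint i j).const_mul _)]
    exact Finset.sum_congr rfl fun j _ => by rw [integral_const_mul, hM]
  simp_rw [this]
  simp only [dotProduct, mulVec, dotProduct]
  refine Finset.sum_congr rfl fun i _ => ?_
  rw [Finset.mul_sum]
  exact Finset.sum_congr rfl fun j _ => by ring

theorem stmt_16 {d : ℕ} {Ω : Type*} [MeasurableSpace Ω] (μ : Measure Ω)
    [IsProbabilityMeasure μ]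
    (x : Ω → EuclideanSpace ℝ (Fin d)) (h' : ℝ → ℝ) (w : EuclideanSpace ℝ (Fin d))
    (Lm Lp C : ℝ) (hLm : 0 < Lm) (hC : 0 < C)
    (hbound : ∀ᵐ ω ∂μ, Lm ≤ |h' ⟪w, x ω⟫| ∧ |h' ⟪w, x ω⟫| ≤ Lp)
    (hint1 : ∀ i j, Integrable (fun ω => x ω i * x ω j) μ)
    (hint2 : ∀ i j, Integrable (fun ω => h' ⟪w, x ω⟫ ^ 2 * (x ω i * x ω j)) μ)
    (Mx Mg : Matrix (Fin d) (Fin d) ℝ)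
    (hMx : ∀ i j, Mx i j = ∫ ω, x ω i * x ω j ∂μ)
    (hMg : ∀ i j, Mg i j = ∫ ω, h' ⟪w, x ω⟫ ^ 2 * (x ω i * x ω j) ∂μ)
    (hcov : (Mx - C • Matrix.diagonal (fun i => Mx i i)).PosSemidef) :
    (Mg - (C * Lm ^ 2 / Lp ^ 2) • Matrix.diagonal (fun i => Mg i i)).PosSemidef := by
  have hLp : 0 < Lp := by
    obtain ⟨ω, h1, h2⟩ := hbound.exists
    linarith
  have hint1' : ∀ i j, Integrable (fun ω => (1 : ℝ) * (x ω i * x ω j)) μ := by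
    intro i j; simpa using hint1 i j
  have hMx' : ∀ i j, Mx i j = ∫ ω, (1 : ℝ) * (x ω i * x ω j) ∂μ := by
    intro i j; simpa using hMx i j
  have hMgsymm : ∀ i j, Mg j i = Mg i j := by
    intro i j
    rw [hMg, hMg]
    simp_rw [mul_comm (x _ j) (x _ i)]
  rw [Matrix.posSemidef_iff_dotProduct_mulVec]
  constructor
  · -- Hermitian
    ext i j
    by_cases h : i = j
    · subst h; simp
    · simp [Matrix.conjTranspose_apply, Matrix.sub_apply, Matrix.smul_apply,
        Matrix.diagonal_apply_ne' _ h, Matrix.diagonal_apply_ne _ h, hMgsymm]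
  · intro v
    have hgS := quad_eq μ (fun ω => h' ⟪w, x ω⟫ ^ 2) x hint2 Mg hMg v
    have hS := quad_eq μ (fun _ => (1 : ℝ)) x hint1' Mx hMx' v
    have hgS_int := quad_int (fun ω => h' ⟪w, x ω⟫ ^ 2) x hint2 v
    have hS_int := quad_int (fun _ => (1 : ℝ)) x hint1' v
    -- lower bound on v ⬝ᵥ Mg *ᵥ v
    have key1 : Lm ^ 2 * (v ⬝ᵥ Mx *ᵥ v) ≤ v ⬝ᵥ Mg *ᵥ v := by
      rw [hgS, hS, ← integral_const_mul]
      refine integral_mono_ae (hS_int.const_mul _) hgS_int ?_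
      filter_upwards [hbound] with ω hω
      obtain ⟨h1, h2⟩ := hω
      have h3 : Lm ^ 2 ≤ h' ⟪w, x ω⟫ ^ 2 := by
        nlinarith [sq_abs (h' ⟪w, x ω⟫)]
      have h4 : (0:ℝ) ≤ (1 : ℝ) * (∑ i, v i * x ω i) ^ 2 := by positivity
      nlinarith [sq_nonneg (∑ i, v i * x ω i)]
    -- diagonal bound
    have keyd : ∀ i, Mg i i ≤ Lp ^ 2 * Mx i i := by
      intro i
      rw [hMg, hMx, ← integral_const_mul]
      refine integral_mono_ae (hint2 i i) ((hint1 i i).const_mul _) ?_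
      filter_upwards [hbound] with ω hω
      obtain ⟨h1, h2⟩ := hω
      have h5 : h' ⟪w, x ω⟫ ^ 2 ≤ Lp ^ 2 := by
        nlinarith [sq_abs (h' ⟪w, x ω⟫), abs_nonneg (h' ⟪w, x ω⟫)]
      exact mul_le_mul_of_nonneg_right h5 (mul_self_nonneg _)
    -- from hcov
    have hcov2 := hcov.dotProduct_mulVec_nonneg v
    simp only [star_trivial, Matrix.sub_mulVec, dotProduct_sub, Matrix.smul_mulVec,
      dotProduct_smul, smul_eq_mul] at hcov2 ⊢
    have hdg : v ⬝ᵥ (Matrix.diagonal fun i => Mg i i) *ᵥ v = ∑ i, v i * (Mg i i * v i) := by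
      simp [dotProduct, Matrix.mulVec_diagonal]
    have hdx : v ⬝ᵥ (Matrix.diagonal fun i => Mx i i) *ᵥ v = ∑ i, v i * (Mx i i * v i) := by
      simp [dotProduct, Matrix.mulVec_diagonal]
    rw [hdg]
    rw [hdx] at hcov2
    set Dg := ∑ i, v i * (Mg i i * v i) with hDg
    set Dx := ∑ i, v i * (Mx i i * v i) with hDx
    have hDle : Dg ≤ Lp ^ 2 * Dx := by
      rw [hDg, hDx, Finset.mul_sum]
      refine Finset.sum_le_sum fun i _ => ?_
      have := keyd i
      nlinarith [mul_self_nonneg (v i)]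
    have h1 : (C * Lm ^ 2 / Lp ^ 2) * Dg ≤ (C * Lm ^ 2 / Lp ^ 2) * (Lp ^ 2 * Dx) :=
      mul_le_mul_of_nonneg_left hDle (by positivity)
    have h2 : (C * Lm ^ 2 / Lp ^ 2) * (Lp ^ 2 * Dx) = C * Lm ^ 2 * Dx := by
      field_simp
    have h3 : Lm ^ 2 * (C * Dx) ≤ Lm ^ 2 * (v ⬝ᵥ Mx *ᵥ v) := by
      have : C * Dx ≤ v ⬝ᵥ Mx *ᵥ v := by linarith
      exact mul_le_mul_of_nonneg_left this (by positivity)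
    nlinarith [key1]
end
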